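/- Let f_1, ..., f_s be homogeneous elements of degree d in S = K[x_1,...,x_n] minimally generating the ideal (f_1,...,f_s). If for every i ≤ s the ideal (f_1,...,f_i) is 1-step linear (its minimal free resolution is linear at the first syzygy step, i.e., Tor_1^S((f_1,...,f_i), K)_j = 0 for j ≠ d+1), then [f_1,...,f_s] is a linear quotient ordering, i.e., for each 1 < i ≤ s the colon ideal (f_1,...,f_{i-1}) : (f_i) is generated in degree 1. -/

import Mathlib

open MvPolynomial

/-- The presentation map `S^s → S`, `g ↦ ∑ j, g j * f j`. -/
noncomputable def combMap {S : Type*} [CommRing S] {s : ℕ} (f : Fin s → S) :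
    (Fin s → S) →ₗ[S] S where
  toFun g := ∑ j, g j * f j
  map_add' a b := by simp [add_mul, Finset.sum_add_distrib]
  map_smul' c a := by simp [Finset.mul_sum, mul_assoc]

/-- The submodule of `S^s` of vectors supported on coordinates `< i`. -/
def suppLT (S : Type*) [CommRing S] (s i : ℕ) : Submodule S (Fin s → S) where
  carrier := {g | ∀ j : Fin s, i ≤ (j : ℕ) → g j = 0}
  add_mem' := by
    intro a b ha hb j hj
    simp [ha j hj, hb j hj]
  zero_mem' := by intro j hj; rfl
  smul_mem' := by
    intro c a ha j hj
    simp [ha j hj]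

/-- An ideal is generated by homogeneous elements of degree 1 (linear forms). -/
def DegOneGen {K : Type*} [CommRing K] {n : ℕ}
    (J : Ideal (MvPolynomial (Fin n) K)) : Prop :=
  ∃ T : Set (MvPolynomial (Fin n) K),
    (∀ g ∈ T, g.IsHomogeneous 1) ∧ J = Ideal.span T


section Aux

lemma mem_suppLT' {S : Type*} [CommRing S] {s i : ℕ} {g : Fin s → S} :
    g ∈ suppLT S s i ↔ ∀ j : Fin s, i ≤ (j : ℕ) → g j = 0 := Iff.rfl

lemma combMap_apply' {S : Type*} [CommRing S] {s : ℕ} (f g : Fin s → S) :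
    combMap f g = ∑ j, g j * f j := rfl

lemma combMap_single' {S : Type*} [CommRing S] {s : ℕ} (f : Fin s → S) (j : Fin s) (p : S) :
    combMap f (Pi.single j p) = p * f j := by
  rw [combMap_apply']
  rw [Finset.sum_eq_single j]
  · simp
  · intro k _ hk; simp [Pi.single_apply, hk]
  · simp

lemma span_le_map' {K : Type*} [Field K] {n s : ℕ} (f : Fin s → MvPolynomial (Fin n) K) (i : ℕ) :
    Ideal.span (f '' {j | (j : ℕ) < i}) ≤
      Submodule.map (combMap f) (suppLT (MvPolynomial (Fin n) K) s i) := by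
  rw [Ideal.span_le]
  rintro x ⟨j, hj, rfl⟩
  refine ⟨Pi.single j 1, ?_, ?_⟩
  · intro k hk
    have hkj : k ≠ j := by rintro rfl; exact absurd hj (not_lt.mpr hk)
    simp [Pi.single_apply, hkj]
  · rw [combMap_single']; ring

end Aux

set_option maxHeartbeats 1000000 in
/-- Let `f 0, …, f (s-1)` be homogeneous elements of degree `d` of `K[x_1,…,x_n]`
minimally generating the ideal they span.  If for every `i ≤ s` the ideal generated by
the first `i` of them is 1-step linear, i.e. the kernel of the presentation
`S(-d)^i → (f 0, …, f (i-1))` is generated in degree 1 (by vectors with linear entries),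
then `[f 0, …, f (s-1)]` is a linear quotient ordering: each colon ideal
`(f 0, …, f (i-1)) : (f i)` is generated in degree 1. -/
theorem one_step_linear_implies_linear_quotients {K : Type*} [Field K] {n s : ℕ} (d : ℕ)
    (f : Fin s → MvPolynomial (Fin n) K)
    (hhom : ∀ i, (f i).IsHomogeneous d)
    (hmin : ∀ i, f i ∉ Ideal.span (f '' {j | j ≠ i}))
    (h1lin : ∀ i ≤ s,
      LinearMap.ker (combMap f) ⊓ suppLT (MvPolynomial (Fin n) K) s i =
        Submodule.span (MvPolynomial (Fin n) K)
          {g | g ∈ LinearMap.ker (combMap f) ⊓ suppLT (MvPolynomial (Fin n) K) s i ∧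
            ∀ j, (g j).IsHomogeneous 1}) :
    ∀ i : Fin s, 0 < (i : ℕ) →
      DegOneGen ((Ideal.span (f '' {j | (j : ℕ) < (i : ℕ)})).colon (Ideal.span {f i})) := by
  intro i hi
  have hle : (i : ℕ) + 1 ≤ s := i.isLt
  set G : Set (Fin s → MvPolynomial (Fin n) K) :=
    {g | g ∈ LinearMap.ker (combMap f) ⊓ suppLT (MvPolynomial (Fin n) K) s ((i : ℕ) + 1) ∧
      ∀ j, (g j).IsHomogeneous 1} with hG
  have hM : LinearMap.ker (combMap f) ⊓ suppLT (MvPolynomial (Fin n) K) s ((i : ℕ) + 1)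
      = Submodule.span (MvPolynomial (Fin n) K) G :=
    h1lin ((i : ℕ) + 1) hle
  refine ⟨(fun g => g i) '' G, ?_, ?_⟩
  · rintro _ ⟨g, hg, rfl⟩; exact hg.2 i
  · have key : ((Ideal.span (f '' {j | (j : ℕ) < (i : ℕ)})).colon (Ideal.span {f i}))
        = Submodule.map (LinearMap.proj i : (Fin s → MvPolynomial (Fin n) K) →ₗ[MvPolynomial (Fin n) K] MvPolynomial (Fin n) K)
            (LinearMap.ker (combMap f) ⊓ suppLT (MvPolynomial (Fin n) K) s ((i : ℕ) + 1)) := by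
      apply le_antisymm
      · intro p hp
        have hpf : p * f i ∈ Ideal.span (f '' {j | (j : ℕ) < (i : ℕ)}) :=
          Ideal.mem_colon_span_singleton.mp hp
        obtain ⟨g, hg, hgc⟩ := span_le_map' f (i : ℕ) hpf
        have hg' : ∀ j : Fin s, (i : ℕ) ≤ (j : ℕ) → g j = 0 := hg
        have h1 : Pi.single i p - g ∈ LinearMap.ker (combMap f) := by
          rw [LinearMap.mem_ker, map_sub, combMap_single', hgc, sub_self]
        have h2 : Pi.single i p - g ∈ suppLT (MvPolynomial (Fin n) K) s ((i : ℕ) + 1) := by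
          intro j hj
          have hji : j ≠ i := by
            intro h; rw [h] at hj; omega
          have hgj : g j = 0 := hg' j (by omega)
          simp [Pi.single_apply, hji, hgj]
        have hmem : Pi.single i p - g ∈ LinearMap.ker (combMap f) ⊓ suppLT (MvPolynomial (Fin n) K) s ((i : ℕ) + 1) :=
          Submodule.mem_inf.mpr ⟨h1, h2⟩
        have hgi : g i = 0 := hg' i le_rfl
        have he : (LinearMap.proj i : (Fin s → MvPolynomial (Fin n) K) →ₗ[MvPolynomial (Fin n) K] MvPolynomial (Fin n) K) (Pi.single i p - g) = p := by
          simp [hgi]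
        rw [← he]
        exact Submodule.mem_map_of_mem hmem
      · rintro _ ⟨v, hv, rfl⟩
        have hker : combMap f v = 0 := (Submodule.mem_inf.mp hv).1
        have hsupp : ∀ j : Fin s, (i : ℕ) + 1 ≤ (j : ℕ) → v j = 0 := (Submodule.mem_inf.mp hv).2
        rw [Ideal.mem_colon_span_singleton]
        have h0 : ∑ j, v j * f j = 0 := hker
        have hsplit : v i * f i + ∑ j ∈ Finset.univ.erase i, v j * f j = ∑ j, v j * f j :=
          Finset.add_sum_erase _ _ (Finset.mem_univ i)
        have hvv : (LinearMap.proj i : (Fin s → MvPolynomial (Fin n) K) →ₗ[MvPolynomial (Fin n) K] MvPolynomial (Fin n) K) v * f i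
            = -∑ j ∈ Finset.univ.erase i, v j * f j := by
          simp only [LinearMap.proj_apply]
          rw [eq_neg_iff_add_eq_zero, hsplit, h0]
        rw [hvv]
        refine neg_mem (Ideal.sum_mem _ ?_)
        intro j hj
        have hji : j ≠ i := Finset.ne_of_mem_erase hj
        by_cases hle' : (i : ℕ) + 1 ≤ (j : ℕ)
        · rw [hsupp j hle']; simp
        · have hjlt : (j : ℕ) < (i : ℕ) := by
            have : (j : ℕ) ≠ (i : ℕ) := fun h => hji (Fin.ext h)
            omega
          exact Ideal.mul_mem_left _ _ (Ideal.subset_span ⟨j, hjlt, rfl⟩)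
    have hmap : Submodule.map
        (LinearMap.proj i : (Fin s → MvPolynomial (Fin n) K) →ₗ[MvPolynomial (Fin n) K] MvPolynomial (Fin n) K)
        (LinearMap.ker (combMap f) ⊓ suppLT (MvPolynomial (Fin n) K) s ((i : ℕ) + 1))
        = Submodule.span (MvPolynomial (Fin n) K) ((fun g => g i) '' G) := by
      rw [hM, Submodule.map_span]
      rfl
    rw [key, hmap]
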